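/- For ℓ > 2, ∫_{a(ℓ)}^{b(ℓ)} 1/((ℓ-k)²+1) · 1/(k²+1) dk = 2·(f(ℓ) + g(ℓ))/((ℓ²+4)·ℓ), where a(ℓ) = (ℓ-√(ℓ²-4))/2, b(ℓ) = (ℓ+√(ℓ²-4))/2, f(ℓ) = ℓ·(arctan(b(ℓ)) - arctan(a(ℓ))), and g(ℓ) = ln(ℓ+√(ℓ²-4)) - ln(ℓ-√(ℓ²-4)). -/

import Mathlib

theorem stmt_12 (l : ℝ) (hl : 2 < l) :
    ∫ k in ((l - Real.sqrt (l ^ 2 - 4)) / 2)..((l + Real.sqrt (l ^ 2 - 4)) / 2),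
        1 / ((l - k) ^ 2 + 1) * (1 / (k ^ 2 + 1)) =
      2 * ((l * (Real.arctan ((l + Real.sqrt (l ^ 2 - 4)) / 2) -
              Real.arctan ((l - Real.sqrt (l ^ 2 - 4)) / 2))) +
            (Real.log (l + Real.sqrt (l ^ 2 - 4)) - Real.log (l - Real.sqrt (l ^ 2 - 4)))) /
        ((l ^ 2 + 4) * l) := by
  have hl0 : (0:ℝ) < l := by linarith
  set s := Real.sqrt (l ^ 2 - 4) with hs_def
  have hs0 : 0 ≤ s := Real.sqrt_nonneg _
  have hs2 : s ^ 2 = l ^ 2 - 4 := Real.sq_sqrt (by nlinarith)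
  have hsl : s < l := by
    nlinarith [hs2, hs0]
  set a := (l - s) / 2 with ha_def
  set b := (l + s) / 2 with hb_def
  have ha0 : 0 < a := by simp only [ha_def]; linarith
  have hb0 : 0 < b := by simp only [hb_def]; linarith
  have hab : a + b = l := by simp only [ha_def, hb_def]; ring
  have ha2 : a ^ 2 + 1 = l * a := by
    simp only [ha_def]; nlinarith [hs2]
  have hb2 : b ^ 2 + 1 = l * b := by
    simp only [hb_def]; nlinarith [hs2]
  have hld : l * (l ^ 2 + 4) ≠ 0 := by positivity
  -- antiderivative
  set F : ℝ → ℝ := fun k =>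
    (Real.log (k ^ 2 + 1) - Real.log ((l - k) ^ 2 + 1)
      + l * (Real.arctan k + Real.arctan (k - l))) / (l * (l ^ 2 + 4)) with hF
  have hderiv : ∀ x ∈ Set.uIcc a b,
      HasDerivAt F (1 / ((l - x) ^ 2 + 1) * (1 / (x ^ 2 + 1))) x := by
    intro x _
    have hx1 : (x:ℝ) ^ 2 + 1 ≠ 0 := by positivity
    have hx2 : (l - x) ^ 2 + 1 ≠ 0 := by positivity
    have h1 : HasDerivAt (fun k : ℝ => Real.log (k ^ 2 + 1)) (2 * x / (x ^ 2 + 1)) x := by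
      have := (((hasDerivAt_pow 2 x)).add_const 1).log hx1
      simpa using this
    have h2 : HasDerivAt (fun k : ℝ => Real.log ((l - k) ^ 2 + 1))
        ((2 * (l - x) * (-1)) / ((l - x) ^ 2 + 1)) x := by
      have hin : HasDerivAt (fun k : ℝ => (l - k) ^ 2 + 1) (2 * (l - x) * (-1)) x := by
        have := (((hasDerivAt_id x).const_sub l).pow 2).add_const 1
        simpa using this
      exact hin.log hx2
    have h3 : HasDerivAt Real.arctan (1 / (1 + x ^ 2)) x := Real.hasDerivAt_arctan x
    have h4 : HasDerivAt (fun k : ℝ => Real.arctan (k - l)) (1 / (1 + (x - l) ^ 2)) x := by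
      have := (Real.hasDerivAt_arctan (x - l)).comp x ((hasDerivAt_id x).sub_const l)
      simpa [Function.comp_def] using this
    have hD : HasDerivAt F
        ((2 * x / (x ^ 2 + 1) - (2 * (l - x) * (-1)) / ((l - x) ^ 2 + 1)
          + l * (1 / (1 + x ^ 2) + 1 / (1 + (x - l) ^ 2))) / (l * (l ^ 2 + 4))) x :=
      ((h1.sub h2).add ((h3.add h4).const_mul l)).div_const _
    convert hD using 1
    have hx2' : 1 + (x - l) ^ 2 ≠ 0 := by positivity
    have hx1' : 1 + x ^ 2 ≠ 0 := by positivity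
    field_simp
    ring
  have hcont : Continuous fun k : ℝ => 1 / ((l - k) ^ 2 + 1) * (1 / (k ^ 2 + 1)) := by
    apply Continuous.mul
    · exact continuous_const.div (by continuity) fun x => by positivity
    · exact continuous_const.div (by continuity) fun x => by positivity
  have hint := intervalIntegral.integral_eq_sub_of_hasDerivAt hderiv
    (hcont.intervalIntegrable a b)
  rw [hint]
  -- evaluate
  have hlb : l - b = a := by linarith
  have hla : l - a = b := by linarith
  have hbl : b - l = -a := by linarith
  have hal : a - l = -b := by linarith
  simp only [hF, hlb, hla, hbl, hal, ha2, hb2, Real.arctan_neg]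
  have hlog1 : Real.log (l * a) = Real.log l + Real.log a := Real.log_mul (ne_of_gt hl0) (ne_of_gt ha0)
  have hlog2 : Real.log (l * b) = Real.log l + Real.log b := Real.log_mul (ne_of_gt hl0) (ne_of_gt hb0)
  have hlog3 : Real.log (l + s) = Real.log 2 + Real.log b := by
    rw [show l + s = 2 * b by simp only [hb_def]; ring]
    exact Real.log_mul two_ne_zero (ne_of_gt hb0)
  have hlog4 : Real.log (l - s) = Real.log 2 + Real.log a := by
    rw [show l - s = 2 * a by simp only [ha_def]; ring]
    exact Real.log_mul two_ne_zero (ne_of_gt ha0)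
  rw [hlog1, hlog2, hlog3, hlog4]
  field_simp
  ring
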